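/- Extremality theorem (lower bound): any hierarchical clustering method H satisfying the Axioms of Value and Transformation produces ultrametrics bounded below by the nonreciprocal ultrametric: u^{NR}_X(x,x') ≤ u_X(x,x') for all networks (X, A_X) and all x, x' ∈ X. -/

import Mathlib

/-- Maximum dissimilarity over consecutive links of a chain (list of nodes). -/
def listCost {X : Type*} (A : X → X → ℝ) (l : List X) : ℝ :=
  (l.zip l.tail).foldr (fun p r => max (A p.1 p.2) r) 0

/-- Minimum over chains from `x` to `x'` of the maximum link cost. -/
noncomputable def minChainCost {X : Type*} (A : X → X → ℝ) (x x' : X) : ℝ :=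
  sInf {c : ℝ | ∃ l : List X, l.head? = some x ∧ l.getLast? = some x' ∧ listCost A l = c}

/-- Symmetrized dissimilarity Ā. -/
def symDis {X : Type*} (A : X → X → ℝ) (x x' : X) : ℝ := max (A x x') (A x' x)

/-- Reciprocal ultrametric. -/
noncomputable def uR {X : Type*} (A : X → X → ℝ) (x x' : X) : ℝ := minChainCost (symDis A) x x'

/-- Nonreciprocal ultrametric. -/
noncomputable def uNR {X : Type*} (A : X → X → ℝ) (x x' : X) : ℝ :=
  max (minChainCost A x x') (minChainCost A x' x)

/-- A (finite, asymmetric) network dissimilarity: nonnegative, vanishing exactly on the diagonal. -/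
def IsNetwork {X : Type*} (A : X → X → ℝ) : Prop :=
  (∀ x x', 0 ≤ A x x') ∧ (∀ x x', A x x' = 0 ↔ x = x')

/-- Ultrametric: nonnegative, symmetric, identity of indiscernibles, strong triangle inequality. -/
def IsUltra {X : Type*} (u : X → X → ℝ) : Prop :=
  (∀ x x', 0 ≤ u x x') ∧ (∀ x x', u x x' = u x' x) ∧
  (∀ x x', u x x' = 0 ↔ x = x') ∧
  (∀ x x' x'', u x x' ≤ max (u x x'') (u x'' x'))


lemma listCost_nil {X : Type*} (A : X → X → ℝ) : listCost A [] = 0 := rfl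
lemma listCost_single {X : Type*} (A : X → X → ℝ) (a : X) : listCost A [a] = 0 := rfl
lemma listCost_cons {X : Type*} (A : X → X → ℝ) (a b : X) (t : List X) :
    listCost A (a::b::t) = max (A a b) (listCost A (b::t)) := rfl

lemma listCost_nonneg {X : Type*} {A : X → X → ℝ} (hA : ∀ x x', 0 ≤ A x x') :
    ∀ l, 0 ≤ listCost A l
  | [] => le_refl 0
  | [_] => le_refl 0
  | a::b::t => by
      rw [listCost_cons]
      exact le_max_of_le_right (listCost_nonneg hA (b::t))

lemma listCost_concat {X : Type*} (A : X → X → ℝ) :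
    ∀ (l : List X) (z z' : X), l.getLast? = some z →
      listCost A (l ++ [z']) ≤ max (listCost A l) (A z z')
  | [], z, z', h => by simp at h
  | [a], z, z', h => by
      simp only [List.getLast?_singleton, Option.some_inj] at h
      subst h
      simp [listCost_cons, listCost_single, max_comm]
  | a::b::t, z, z', h => by
      rw [List.getLast?_cons_cons] at h
      have ih := listCost_concat A (b::t) z z' h
      rw [List.cons_append] at ih ⊢
      rw [List.cons_append, listCost_cons, listCost_cons]
      calc max (A a b) (listCost A (b :: (t ++ [z'])))
          ≤ max (A a b) (max (listCost A (b::t)) (A z z')) := max_le_max le_rfl ih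
        _ = max (max (A a b) (listCost A (b::t))) (A z z') := (max_assoc _ _ _).symm

section mcc
variable {X : Type*} {A : X → X → ℝ} (hA : ∀ x x', 0 ≤ A x x')
include hA

lemma chains_bddBelow (x x' : X) :
    BddBelow {c : ℝ | ∃ l : List X, l.head? = some x ∧ l.getLast? = some x' ∧ listCost A l = c} :=
  ⟨0, by rintro c ⟨l, -, -, rfl⟩; exact listCost_nonneg hA l⟩

omit hA in
lemma chains_nonempty (x x' : X) :
    Set.Nonempty {c : ℝ | ∃ l : List X, l.head? = some x ∧ l.getLast? = some x' ∧ listCost A l = c} :=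
  ⟨listCost A [x, x'], [x, x'], by simp, by simp, rfl⟩

lemma mcc_le_listCost {x x' : X} {l : List X} (h1 : l.head? = some x)
    (h2 : l.getLast? = some x') : minChainCost A x x' ≤ listCost A l :=
  csInf_le (chains_bddBelow hA x x') ⟨l, h1, h2, rfl⟩

lemma mcc_self_le (x : X) : minChainCost A x x ≤ 0 := by
  have := mcc_le_listCost hA (l := [x]) (x := x) (x' := x) rfl rfl
  simpa [listCost_single] using this

lemma mcc_nonneg (x x' : X) : 0 ≤ minChainCost A x x' :=
  le_csInf (chains_nonempty x x') (by rintro c ⟨l, -, -, rfl⟩; exact listCost_nonneg hA l)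

lemma mcc_step (x z z' : X) :
    minChainCost A x z' ≤ max (minChainCost A x z) (A z z') := by
  refine le_of_forall_pos_le_add ?_
  intro ε hε
  obtain ⟨c, ⟨l, h1, h2, rfl⟩, hc⟩ :=
    exists_lt_of_csInf_lt (chains_nonempty (A := A) x z)
      (show sInf _ < minChainCost A x z + ε by
        exact lt_add_of_pos_right _ hε)
  have hlne : l ≠ [] := by rintro rfl; simp at h1
  have hh : (l ++ [z']).head? = some x := by
    rcases l with _ | ⟨a, t⟩
    · simp at h1
    · simpa using h1
  have hg : (l ++ [z']).getLast? = some z' := by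
    simp [List.getLast?_concat]
  calc minChainCost A x z' ≤ listCost A (l ++ [z']) := mcc_le_listCost hA hh hg
    _ ≤ max (listCost A l) (A z z') := listCost_concat A l z z' h2
    _ ≤ max (minChainCost A x z + ε) (A z z') := max_le_max hc.le le_rfl
    _ ≤ max (minChainCost A x z) (A z z') + ε := by
        apply max_le
        · exact add_le_add_left (le_max_left _ _) ε
        · exact le_add_of_le_of_nonneg (le_max_right _ _) hε.le

end mcc

theorem extremal_lower_bound
    (H : ∀ (X : Type) [Fintype X], (X → X → ℝ) → (X → X → ℝ))
    (hUltra : ∀ (X : Type) [Fintype X] (A : X → X → ℝ), IsNetwork A → IsUltra (H X A))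
    (hValue : ∀ (X : Type) [Fintype X] (A : X → X → ℝ), IsNetwork A →
      ∀ p q : X, p ≠ q → (∀ x : X, x = p ∨ x = q) →
        H X A p q = max (A p q) (A q p))
    (hTransf : ∀ (X Y : Type) [Fintype X] [Fintype Y]
        (A_X : X → X → ℝ) (A_Y : Y → Y → ℝ), IsNetwork A_X → IsNetwork A_Y →
      ∀ φ : X → Y, (∀ x x' : X, A_Y (φ x) (φ x') ≤ A_X x x') →
        ∀ x x' : X, H Y A_Y (φ x) (φ x') ≤ H X A_X x x') :
    ∀ (X : Type) [Fintype X] (A : X → X → ℝ), IsNetwork A →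
      ∀ x x' : X, uNR A x x' ≤ H X A x x' := by
  intro X _ A hA x x'
  classical
  obtain ⟨hA0, hAdiag⟩ := hA
  obtain ⟨hU0, hUsym, hUdiag, hUtri⟩ := hUltra X A ⟨hA0, hAdiag⟩
  -- key lemma: directed min chain cost is bounded by H
  have key : ∀ a b : X, minChainCost A a b ≤ H X A a b := by
    intro a b
    by_cases hab : a = b
    · subst hab
      exact (mcc_self_le hA0 a).trans (hU0 a a)
    · by_contra hcon
      push_neg at hcon
      set δ := H X A a b with hδdef
      have hδ0 : 0 ≤ δ := hU0 a b
      -- from a chain reaching z cheaply and a cheap link z→z', reach z' cheaply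
      have hstep : ∀ z z' : X, minChainCost A a z ≤ δ → A z z' ≤ δ →
          minChainCost A a z' ≤ δ := by
        intro z z' h1 h2
        exact (mcc_step hA0 a z z').trans (max_le h1 h2)
      -- the "boundary" pairs
      set P : Finset (X × X) := Finset.univ.filter
        (fun zz : X × X => minChainCost A a zz.1 ≤ δ ∧ ¬ minChainCost A a zz.2 ≤ δ) with hPdef
      have hmccaa : minChainCost A a a ≤ δ := (mcc_self_le hA0 a).trans hδ0
      have habP : (a, b) ∈ P := by
        rw [hPdef, Finset.mem_filter]
        exact ⟨Finset.mem_univ _, hmccaa, not_le.mpr hcon⟩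
      have hPne : P.Nonempty := ⟨(a, b), habP⟩
      set d2 : ℝ := P.inf' hPne (fun zz => A zz.1 zz.2) with hd2def
      have hd2 : δ < d2 := by
        rw [hd2def, Finset.lt_inf'_iff]
        intro zz hzz
        rw [hPdef, Finset.mem_filter] at hzz
        by_contra hle
        push_neg at hle
        exact hzz.2.2 (hstep zz.1 zz.2 hzz.2.1 hle)
      -- minimum off-diagonal dissimilarity
      set Q : Finset (X × X) := Finset.univ.filter (fun zz : X × X => zz.1 ≠ zz.2) with hQdef
      have habQ : (a, b) ∈ Q := by
        rw [hQdef, Finset.mem_filter]; exact ⟨Finset.mem_univ _, hab⟩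
      have hQne : Q.Nonempty := ⟨(a, b), habQ⟩
      set e : ℝ := Q.inf' hQne (fun zz => A zz.1 zz.2) with hedef
      have he : 0 < e := by
        rw [hedef, Finset.lt_inf'_iff]
        intro zz hzz
        rw [hQdef, Finset.mem_filter] at hzz
        exact lt_of_le_of_ne (hA0 _ _) (fun h => hzz.2 ((hAdiag _ _).mp h.symm))
      set e2 : ℝ := min e d2 with he2def
      have he2 : 0 < e2 := lt_min he (hδ0.trans_lt hd2)
      -- the two-point comparison network
      set B : Bool → Bool → ℝ := fun u v => if u = v then 0 else if u = false then d2 else e2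
        with hBdef
      have hBnet : IsNetwork B := by
        constructor
        · intro u v
          rw [hBdef]
          dsimp only
          split_ifs
          · exact le_refl 0
          · exact (hδ0.trans_lt hd2).le
          · exact he2.le
        · intro u v
          rw [hBdef]
          dsimp only
          split_ifs with h1 h2
          · simp [h1]
          · simp [h1]; exact (hδ0.trans_lt hd2).ne'
          · simp [h1]; exact he2.ne'
      have hBsame : ∀ u, B u u = 0 := fun u => by simp [hBdef]
      have hBft : B false true = d2 := by simp [hBdef]
      have hBtf : B true false = e2 := by simp [hBdef]
      have he2d2 : e2 ≤ d2 := by rw [he2def]; exact min_le_right _ _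
      set φ : X → Bool := fun z => if minChainCost A a z ≤ δ then false else true with hφdef
      have hφpos : ∀ z, minChainCost A a z ≤ δ → φ z = false := by
        intro z hz; rw [hφdef]; simp [hz]
      have hφneg : ∀ z, ¬ minChainCost A a z ≤ δ → φ z = true := by
        intro z hz; rw [hφdef]; simp [hz]
      have hφred : ∀ z z' : X, B (φ z) (φ z') ≤ A z z' := by
        intro z z'
        by_cases h1 : minChainCost A a z ≤ δ <;> by_cases h2 : minChainCost A a z' ≤ δ
        · rw [hφpos z h1, hφpos z' h2, hBsame]; exact hA0 z z'
        · rw [hφpos z h1, hφneg z' h2, hBft]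
          have hmem : (z, z') ∈ P := by
            rw [hPdef, Finset.mem_filter]; exact ⟨Finset.mem_univ _, h1, h2⟩
          rw [hd2def]
          exact Finset.inf'_le (fun zz => A zz.1 zz.2) hmem
        · rw [hφneg z h1, hφpos z' h2, hBtf]
          have hne : z ≠ z' := by rintro rfl; exact h1 h2
          have hmem : (z, z') ∈ Q := by
            rw [hQdef, Finset.mem_filter]; exact ⟨Finset.mem_univ _, hne⟩
          have hele : e ≤ A z z' := by
            rw [hedef]; exact Finset.inf'_le (fun zz => A zz.1 zz.2) hmem
          calc e2 ≤ e := by rw [he2def]; exact min_le_left _ _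
            _ ≤ A z z' := hele
        · rw [hφneg z h1, hφneg z' h2, hBsame]; exact hA0 z z'
      have hφa : φ a = false := hφpos a hmccaa
      have hφb : φ b = true := hφneg b (not_le.mpr hcon)
      have hval : H Bool B false true = d2 := by
        rw [hValue Bool B hBnet false true (by simp) (fun u => by cases u <;> simp)]
        rw [hBft, hBtf]
        exact max_eq_left he2d2
      have htr := hTransf X Bool A B ⟨hA0, hAdiag⟩ hBnet φ hφred a b
      rw [hφa, hφb, hval] at htr
      exact absurd htr (not_le.mpr hd2)
  rw [uNR]
  exact max_le (key x x') ((key x' x).trans_eq (hUsym x' x))
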